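/- Fix λ > 0 and a > 0. Then as n → ∞, (log n / n)^{e^λ (1 - λ/n)^{n - an/log n}} = (log n / n) · e^{-λa} · (1 + λa·(log log n)/log n + O(1/log n)). -/

import Mathlib

open Filter Asymptotics Real

lemma evA {K : ℝ} (hK : 0 < K) : ∀ᶠ z : ℝ in atTop, K * Real.log z ≤ z := by
  have h := Real.isLittleO_log_id_atTop.def (c := 1 / K) (by positivity)
  filter_upwards [h, eventually_ge_atTop (1 : ℝ)] with z hz hz1
  simp only [Real.norm_eq_abs, id_eq] at hz
  rw [abs_of_nonneg (Real.log_nonneg hz1), abs_of_nonneg (by linarith)] at hz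
  have := mul_le_mul_of_nonneg_left hz hK.le
  rw [mul_comm (1 / K) z, ← mul_assoc] at this
  have hKK : K * (1 / K) = 1 := by field_simp
  nlinarith [Real.log_nonneg hz1]

lemma evB : ∀ᶠ z : ℝ in atTop, (Real.log z) ^ 2 ≤ z := by
  have h := (Real.isLittleO_pow_log_id_atTop (n := 2)).def one_pos
  filter_upwards [h, eventually_ge_atTop (1 : ℝ)] with z hz hz1
  simp only [Real.norm_eq_abs, id_eq, one_mul] at hz
  calc (Real.log z) ^ 2 ≤ |(Real.log z) ^ 2| := le_abs_self _
    _ ≤ |z| := hz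
    _ = z := abs_of_nonneg (by linarith)

set_option maxHeartbeats 1000000 in
/-- `(log n / n)^{e^λ (1-λ/n)^{n - an/log n}}
      = (log n / n) · e^{-λa} · (1 + λa·(log log n)/log n + O(1/log n))`. -/
theorem rpow_exp_factor_asymp (l a : ℝ) (hl : 0 < l) (ha : 0 < a) :
    ∃ ε : ℕ → ℝ, (ε =O[atTop] fun n : ℕ => 1 / Real.log n) ∧
      ∀ᶠ n : ℕ in atTop,
        (Real.log n / n) ^ (Real.exp l * (1 - l / n) ^ ((n : ℝ) - a * n / Real.log n))
          = (Real.log n / n) * Real.exp (-(l * a)) *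
              (1 + l * a * Real.log (Real.log n) / Real.log n + ε n) := by
  have hC₁ : (0:ℝ) < 2 * l ^ 2 + 4 * l ^ 2 * a ^ 2 := by positivity
  set C₁ : ℝ := 2 * l ^ 2 + 4 * l ^ 2 * a ^ 2 with hC₁def
  clear_value C₁
  refine ⟨fun n => Real.exp ((Real.exp l * (1 - l / n) ^ ((n : ℝ) - a * n / Real.log n) - 1)
      * Real.log (Real.log n / n) + l * a) - 1 - l * a * Real.log (Real.log n) / Real.log n,
    ?_, ?_⟩
  · -- the O(1/log n) bound
    have hlog : Tendsto (fun n : ℕ => Real.log n) atTop atTop :=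
      Real.tendsto_log_atTop.comp tendsto_natCast_atTop_atTop
    have hloglog : Tendsto (fun n : ℕ => Real.log (Real.log n)) atTop atTop :=
      Real.tendsto_log_atTop.comp hlog
    rw [isBigO_iff]
    refine ⟨(l * a + C₁) ^ 2 + C₁, ?_⟩
    filter_upwards [tendsto_natCast_atTop_atTop.eventually_ge_atTop (1 : ℝ),
      hlog.eventually_ge_atTop 1,
      hloglog.eventually_ge_atTop 1,
      tendsto_natCast_atTop_atTop.eventually evB,
      tendsto_natCast_atTop_atTop.eventually (evA (K := 2 * l / a) (by positivity)),
      hlog.eventually_ge_atTop (2 * l * a),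
      hlog.eventually_ge_atTop a,
      tendsto_natCast_atTop_atTop.eventually_ge_atTop (2 * l),
      hlog.eventually evB,
      hlog.eventually (evA (K := l * a + C₁) (by positivity))]
      with n hn1 hx1 hy1 hxN hKN hx6 hx7 hN8 hy9 hy10
    set N : ℝ := (n : ℝ) with hNdef
    clear_value N
    set x : ℝ := Real.log N with hxdef
    clear_value x
    set y : ℝ := Real.log x with hydef
    clear_value y
    have hN0 : (0:ℝ) < N := by linarith
    have hx0 : (0:ℝ) < x := by linarith
    have hy0 : (0:ℝ) < y := by linarith
    have h2lx : 2 * l * x ≤ a * N := by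
      rw [div_mul_eq_mul_div, div_le_iff₀ ha] at hKN; linarith
    -- Taylor bound for log(1 - l/N)
    have hp0 : (0:ℝ) < l / N := by positivity
    have hp2 : l / N ≤ 1 / 2 := by rw [div_le_iff₀ hN0]; linarith
    have hq := Real.abs_log_sub_add_sum_range_le (x := l / N)
      (by rw [abs_of_pos hp0]; linarith) 1
    norm_num [Finset.sum_range_one] at hq
    rw [abs_of_pos hp0] at hq
    set q : ℝ := Real.log (1 - l / N) + l / N with hqdef
    clear_value q
    have hqb : |q| ≤ 2 * (l / N) ^ 2 := by
      have h1 : (l / N) ^ 2 / (1 - l / N) ≤ 2 * (l / N) ^ 2 := by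
        rw [div_le_iff₀ (by linarith)]
        have hc : 0 ≤ (l / N) ^ 2 * (1 - 2 * (l / N)) := by
          apply mul_nonneg (sq_nonneg _); linarith
        linarith [hc]
      calc |q| = |l / N + Real.log (1 - l / N)| := by rw [hqdef, add_comm]
        _ ≤ (l / N) ^ 2 / (1 - l / N) := hq
        _ ≤ 2 * (l / N) ^ 2 := h1
    set m : ℝ := N - a * N / x with hmdef
    clear_value m
    have hanx : a * N / x ≤ N := by
      rw [div_le_iff₀ hx0]
      have := mul_le_mul_of_nonneg_right hx7 hN0.le
      linarith
    have hm0 : 0 ≤ m := by rw [hmdef]; linarith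
    have hmN : m ≤ N := by
      have : 0 ≤ a * N / x := by positivity
      rw [hmdef]; linarith
    set u : ℝ := l * a / x + m * q with hudef
    clear_value u
    have hE : Real.exp l * (1 - l / N) ^ m = Real.exp u := by
      rw [Real.rpow_def_of_pos (by linarith), ← Real.exp_add]
      congr 1
      have hlq : Real.log (1 - l / N) = q - l / N := by rw [hqdef]; ring
      rw [hlq, hudef, hmdef]
      field_simp
      ring
    have hmq : |m * q| ≤ 2 * l ^ 2 / N := by
      rw [abs_mul, abs_of_nonneg hm0]
      calc m * |q| ≤ N * (2 * (l / N) ^ 2) := by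
            apply mul_le_mul hmN hqb (abs_nonneg q) hN0.le
        _ = 2 * l ^ 2 / N := by field_simp
    have h2l2 : 2 * l ^ 2 / N ≤ l * a / x := by
      rw [div_le_div_iff₀ hN0 hx0]
      have h := mul_le_mul_of_nonneg_left h2lx hl.le
      linarith
    have hu_abs : |u| ≤ 2 * (l * a) / x := by
      calc |u| ≤ |l * a / x| + |m * q| := by rw [hudef]; exact abs_add_le _ _
        _ ≤ l * a / x + l * a / x := by
            rw [abs_of_pos (by positivity)]
            exact add_le_add le_rfl (hmq.trans h2l2)
        _ = 2 * (l * a) / x := by ring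
    have hu1 : |u| ≤ 1 := by
      refine hu_abs.trans ?_
      rw [div_le_one hx0]; linarith
    have hs := Real.abs_exp_sub_one_sub_id_le hu1
    have hsb : |Real.exp u - 1 - u| ≤ 4 * l ^ 2 * a ^ 2 / x ^ 2 := by
      refine hs.trans ?_
      calc u ^ 2 = |u| ^ 2 := (sq_abs u).symm
        _ ≤ (2 * (l * a) / x) ^ 2 := pow_le_pow_left₀ (abs_nonneg u) hu_abs 2
        _ = 4 * l ^ 2 * a ^ 2 / x ^ 2 := by field_simp; ring
    have hL : Real.log (x / N) = y - x := by
      rw [Real.log_div (ne_of_gt hx0) (ne_of_gt hN0), ← hxdef, ← hydef]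
    have hyx : y ≤ x := by
      have h1 := mul_le_mul_of_nonneg_left hy1 hy0.le
      have h2 : y * y = y ^ 2 := by ring
      linarith [hy9]
    set s : ℝ := Real.exp u - 1 - u with hsdef
    clear_value s
    set t : ℝ := (m * q + s) * (y - x) with htdef
    clear_value t
    have htb : |t| ≤ C₁ / x := by
      have hxN' : x / N ≤ 1 / x := by
        rw [div_le_div_iff₀ hN0 hx0]
        have hxx : x * x = x ^ 2 := by ring
        linarith
      have h1 : |y - x| ≤ x := by rw [abs_of_nonpos (by linarith)]; linarith
      calc |t| = |m * q + s| * |y - x| := by rw [htdef, abs_mul]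
        _ ≤ (2 * l ^ 2 / N + 4 * l ^ 2 * a ^ 2 / x ^ 2) * x := by
            apply mul_le_mul _ h1 (abs_nonneg _) (by positivity)
            exact (abs_add_le _ _).trans (add_le_add hmq hsb)
        _ = 2 * l ^ 2 * (x / N) + 4 * l ^ 2 * a ^ 2 / x := by field_simp
        _ ≤ 2 * l ^ 2 * (1 / x) + 4 * l ^ 2 * a ^ 2 / x := by
            have := mul_le_mul_of_nonneg_left hxN' (by positivity : (0:ℝ) ≤ 2 * l ^ 2)
            linarith
        _ = C₁ / x := by rw [hC₁def]; field_simp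
    set G : ℝ := (Real.exp l * (1 - l / N) ^ m - 1) * Real.log (x / N) + l * a with hGdef
    clear_value G
    have hG : G = l * a * y / x + t := by
      rw [hGdef, hE, hL, htdef, hsdef, hudef]
      field_simp
      ring
    have hGb : |G| ≤ (l * a + C₁) * y / x := by
      rw [hG]
      calc |l * a * y / x + t| ≤ |l * a * y / x| + |t| := abs_add_le _ _
        _ ≤ l * a * y / x + C₁ / x := by
            rw [abs_of_pos (by positivity)]; exact add_le_add le_rfl htb
        _ ≤ (l * a + C₁) * y / x := by
            rw [← add_div, div_le_div_iff₀ hx0 hx0]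
            have h1 := mul_le_mul_of_nonneg_left hy1 hC₁.le
            have h2 := mul_le_mul_of_nonneg_right
              (add_le_add (le_refl (l * a * y)) h1) hx0.le
            calc (l * a * y + C₁) * x ≤ (l * a * y + C₁ * y) * x := by
                  apply mul_le_mul_of_nonneg_right _ hx0.le
                  linarith [h1]
              _ = (l * a + C₁) * y * x := by ring
    have hG1 : |G| ≤ 1 := by
      refine hGb.trans ?_
      rw [div_le_one hx0]; linarith
    have hGe := Real.abs_exp_sub_one_sub_id_le hG1
    have hGe2 : |Real.exp G - 1 - G| ≤ (l * a + C₁) ^ 2 / x := by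
      refine hGe.trans ?_
      have h1 : G ^ 2 ≤ ((l * a + C₁) * y / x) ^ 2 := by
        calc G ^ 2 = |G| ^ 2 := (sq_abs G).symm
          _ ≤ ((l * a + C₁) * y / x) ^ 2 :=
              pow_le_pow_left₀ (abs_nonneg G) hGb 2
      refine h1.trans ?_
      rw [div_pow, div_le_div_iff₀ (by positivity) hx0]
      have h2 := mul_le_mul_of_nonneg_right
        (mul_le_mul_of_nonneg_left hy9 (by positivity : (0:ℝ) ≤ (l * a + C₁) ^ 2)) hx0.le
      calc ((l * a + C₁) * y) ^ 2 * x = (l * a + C₁) ^ 2 * y ^ 2 * x := by ring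
        _ ≤ (l * a + C₁) ^ 2 * x * x := h2
        _ = (l * a + C₁) ^ 2 * x ^ 2 := by ring
    have hEps : Real.exp G - 1 - l * a * y / x = (Real.exp G - 1 - G) + t := by
      rw [hG]; ring
    rw [Real.norm_eq_abs, Real.norm_eq_abs, hEps,
      abs_of_pos (by positivity : (0:ℝ) < 1 / x)]
    calc |Real.exp G - 1 - G + t| ≤ |Real.exp G - 1 - G| + |t| := abs_add_le _ _
      _ ≤ (l * a + C₁) ^ 2 / x + C₁ / x := add_le_add hGe2 htb
      _ = ((l * a + C₁) ^ 2 + C₁) * (1 / x) := by ring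
  · -- the exact formula
    have hlog : Tendsto (fun n : ℕ => Real.log n) atTop atTop :=
      Real.tendsto_log_atTop.comp tendsto_natCast_atTop_atTop
    filter_upwards [tendsto_natCast_atTop_atTop.eventually_ge_atTop (1 : ℝ),
      hlog.eventually_ge_atTop 1] with n hn1 hx1
    have hN0 : (0:ℝ) < (n : ℝ) := by linarith
    have hb : (0:ℝ) < Real.log n / n := div_pos (by linarith) hN0
    set E : ℝ := Real.exp l * (1 - l / n) ^ ((n : ℝ) - a * n / Real.log n) with hEdef
    clear_value E
    rw [Real.rpow_def_of_pos hb,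
      show 1 + l * a * Real.log (Real.log n) / Real.log n +
          (Real.exp ((E - 1) * Real.log (Real.log n / n) + l * a) - 1 -
            l * a * Real.log (Real.log n) / Real.log n)
        = Real.exp ((E - 1) * Real.log (Real.log n / n) + l * a) from by ring,
      show Real.log (Real.log n / n) * E
          = Real.log (Real.log n / n) + (-(l * a))
            + ((E - 1) * Real.log (Real.log n / n) + l * a) from by ring,
      Real.exp_add, Real.exp_add, Real.exp_log hb]
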